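/- Every maximal tubing of a finite simple graph G=(V,E) has cardinality exactly |V| + |E|. -/

import Mathlib

set_option linter.unusedSectionVars false
set_option linter.unusedVariables false

open Finset

variable {V : Type} [Fintype V] [DecidableEq V]

/-- A tube of the finite simple graph on vertex type `V` with edge set `E`: a nonempty
connected (not necessarily induced) subgraph, recorded by its vertex and edge sets. -/
structure Tube (E : Finset (Sym2 V)) where
  verts : Finset V
  edges : Finset (Sym2 V)
  nonempty : verts.Nonempty
  edges_sub : edges ⊆ E
  endpoints_mem : ∀ e ∈ edges, ∀ v ∈ e, v ∈ verts
  conn : ∀ u ∈ verts, ∀ w ∈ verts,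
    Relation.ReflTransGen (fun a b => s(a, b) ∈ edges) u w

theorem Tube.ext' {E : Finset (Sym2 V)} {a b : Tube E}
    (h1 : a.verts = b.verts) (h2 : a.edges = b.edges) : a = b := by
  cases a; cases b; subst h1; subst h2; rfl

instance {E : Finset (Sym2 V)} : DecidableEq (Tube E) := fun a b =>
  decidable_of_iff (a.verts = b.verts ∧ a.edges = b.edges)
    ⟨fun h => Tube.ext' h.1 h.2, fun h => by subst h; exact ⟨rfl, rfl⟩⟩

/-- Tubes are partially ordered by inclusion: `t₁ ⊆ t₂` iff
`V(t₁) ⊆ V(t₂)` and `E(t₁) ⊆ E(t₂)`. -/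
instance {E : Finset (Sym2 V)} : PartialOrder (Tube E) where
  le a b := a.verts ⊆ b.verts ∧ a.edges ⊆ b.edges
  le_refl a := ⟨Finset.Subset.refl _, Finset.Subset.refl _⟩
  le_trans a b c h₁ h₂ := ⟨h₁.1.trans h₂.1, h₁.2.trans h₂.2⟩
  le_antisymm a b h₁ h₂ :=
    Tube.ext' (Finset.Subset.antisymm h₁.1 h₂.1) (Finset.Subset.antisymm h₁.2 h₂.2)

/-- A singleton tube: a single vertex and no edges. -/
def Tube.IsSingleton {E : Finset (Sym2 V)} (t : Tube E) : Prop :=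
  ∃ v : V, t.verts = {v} ∧ t.edges = ∅

/-- A tubing: a set of tubes, any two of which are disjoint or nested. -/
def IsTubing (E : Finset (Sym2 V)) (T : Finset (Tube E)) : Prop :=
  ∀ t₁ ∈ T, ∀ t₂ ∈ T,
    Disjoint t₁.verts t₂.verts ∨ t₁.edges ⊆ t₂.edges ∨ t₂.edges ⊆ t₁.edges

/-- A maximal tubing: a tubing maximal under inclusion. -/
def IsMaxTubing (E : Finset (Sym2 V)) (T : Finset (Tube E)) : Prop :=
  IsTubing E T ∧ ∀ T' : Finset (Tube E), IsTubing E T' → T ⊆ T' → T' = T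

namespace St8



def evs (A : Finset (Sym2 V)) : Finset V := Finset.univ.filter fun v => ∃ e ∈ A, v ∈ e

lemma mem_evs {A : Finset (Sym2 V)} {v : V} : v ∈ evs A ↔ ∃ e ∈ A, v ∈ e := by
  simp [evs]

lemma evs_mono {A B : Finset (Sym2 V)} (h : A ⊆ B) : evs A ⊆ evs B := by
  intro v hv
  rw [mem_evs] at hv ⊢
  obtain ⟨e, he, hve⟩ := hv
  exact ⟨e, h he, hve⟩

def Rel (A : Finset (Sym2 V)) : V → V → Prop :=
  Relation.ReflTransGen fun a b => s(a, b) ∈ A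

lemma Rel.mono {A B : Finset (Sym2 V)} (h : A ⊆ B) {u w : V} (hr : Rel A u w) :
    Rel B u w :=
  by
  induction hr with
  | refl => exact Relation.ReflTransGen.refl
  | tail _ hab ih => exact Relation.ReflTransGen.tail ih (h hab)

lemma Rel.symm' {A : Finset (Sym2 V)} {u w : V} (hr : Rel A u w) : Rel A w u := by
  induction hr with
  | refl => exact Relation.ReflTransGen.refl
  | tail h1 h2 ih => exact Relation.ReflTransGen.head (by rwa [Sym2.eq_swap]) ih

def Conn (A : Finset (Sym2 V)) : Prop := ∀ u ∈ evs A, ∀ w ∈ evs A, Rel A u w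

def Compat (A B : Finset (Sym2 V)) : Prop :=
  Disjoint (evs A) (evs B) ∨ A ⊆ B ∨ B ⊆ A

lemma Compat.symm' {A B : Finset (Sym2 V)} (h : Compat A B) : Compat B A := by
  rcases h with h | h | h
  · exact Or.inl h.symm
  · exact Or.inr (Or.inr h)
  · exact Or.inr (Or.inl h)

def Maxl (G : Finset (Finset (Sym2 V))) (c : Finset (Sym2 V)) : Prop :=
  c ∈ G ∧ ∀ c' ∈ G, c ⊆ c' → c = c'

lemma exists_maxl {G : Finset (Finset (Sym2 V))} {B : Finset (Sym2 V)} (hB : B ∈ G) :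
    ∃ c, Maxl G c ∧ B ⊆ c := by
  obtain ⟨c, hc, hmax⟩ := Finset.exists_max_image (G.filter fun c => B ⊆ c) Finset.card
    ⟨B, by simp [hB]⟩
  rw [Finset.mem_filter] at hc
  refine ⟨c, ⟨hc.1, fun c' hc' hcc' => ?_⟩, hc.2⟩
  have hc'f : c' ∈ G.filter fun c => B ⊆ c := by
    rw [Finset.mem_filter]; exact ⟨hc', hc.2.trans hcc'⟩
  exact Finset.eq_of_subset_of_card_le hcc' (hmax c' hc'f)

open scoped Classical in
/-- glue the edge `f` with all maximal members of `G` touching `f` -/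
noncomputable def glue (G : Finset (Finset (Sym2 V))) (f : Sym2 V) : Finset (Sym2 V) :=
  insert f ((G.filter fun c => Maxl G c ∧ ∃ v ∈ evs c, v ∈ f).sup id)

lemma mem_glue {G : Finset (Finset (Sym2 V))} {f e : Sym2 V} :
    e ∈ glue G f ↔ e = f ∨ ∃ c ∈ G, (Maxl G c ∧ ∃ v ∈ evs c, v ∈ f) ∧ e ∈ c := by
  classical
  simp only [glue, Finset.mem_insert, Finset.mem_sup, Finset.mem_filter, id]
  constructor
  · rintro (h | ⟨c, ⟨h1, h2⟩, h3⟩)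
    · exact Or.inl h
    · exact Or.inr ⟨c, h1, h2, h3⟩
  · rintro (h | ⟨c, h1, h2, h3⟩)
    · exact Or.inl h
    · exact Or.inr ⟨c, ⟨h1, h2⟩, h3⟩

lemma self_mem_glue {G : Finset (Finset (Sym2 V))} {f : Sym2 V} : f ∈ glue G f :=
  mem_glue.mpr (Or.inl rfl)

lemma glue_subset {G : Finset (Finset (Sym2 V))} {f : Sym2 V} {A : Finset (Sym2 V)}
    (hf : f ∈ A) (h : ∀ c ∈ G, c ⊆ A) : glue G f ⊆ A := by
  intro e he
  rcases mem_glue.mp he with rfl | ⟨c, hc, _, hec⟩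
  · exact hf
  · exact h c hc hec

lemma conn_glue {G : Finset (Finset (Sym2 V))} {f : Sym2 V}
    (hconn : ∀ c ∈ G, Conn c) : Conn (glue G f) := by
  -- every vertex of the glue reaches an endpoint of f
  have key : ∀ v ∈ evs (glue G f), ∃ a, a ∈ f ∧ Rel (glue G f) v a := by
    intro v hv
    rw [mem_evs] at hv
    obtain ⟨e, he, hve⟩ := hv
    rcases mem_glue.mp he with rfl | ⟨c, hc, ⟨hmax, t, htc, htf⟩, hec⟩
    · exact ⟨v, hve, Relation.ReflTransGen.refl⟩
    · have hcg : c ⊆ glue G f := by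
        intro x hx
        exact mem_glue.mpr (Or.inr ⟨c, hc, ⟨hmax, t, htc, htf⟩, hx⟩)
      have hvc : v ∈ evs c := mem_evs.mpr ⟨e, hec, hve⟩
      exact ⟨t, htf, Rel.mono hcg (hconn c hc v hvc t htc)⟩
  intro u hu w hw
  obtain ⟨a, haf, hua⟩ := key u hu
  obtain ⟨b, hbf, hwb⟩ := key w hw
  have hab : Rel (glue G f) a b := by
    induction f using Sym2.ind with
    | _ x y =>
      rw [Sym2.mem_iff] at haf hbf
      rcases haf with rfl | rfl <;> rcases hbf with rfl | rfl
      · exact Relation.ReflTransGen.refl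
      · exact Relation.ReflTransGen.single self_mem_glue
      · exact Relation.ReflTransGen.single (by rw [Sym2.eq_swap]; exact self_mem_glue)
      · exact Relation.ReflTransGen.refl
  exact (hua.trans hab).trans hwb.symm'

lemma glue_compat {G : Finset (Finset (Sym2 V))} {f : Sym2 V}
    (hpair : ∀ A ∈ G, ∀ B ∈ G, Compat A B) :
    ∀ A' ∈ G, A' ⊆ glue G f ∨ Disjoint (evs A') (evs (glue G f)) := by
  intro A' hA'
  obtain ⟨c, hcmax, hA'c⟩ := exists_maxl hA'
  by_cases htouch : ∃ v ∈ evs c, v ∈ f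
  · left
    refine hA'c.trans fun x hx => mem_glue.mpr (Or.inr ⟨c, hcmax.1, ⟨hcmax, htouch⟩, hx⟩)
  · right
    rw [Finset.disjoint_left]
    intro v hvA' hvg
    have hvc : v ∈ evs c := evs_mono hA'c hvA'
    rw [mem_evs] at hvg
    obtain ⟨e, he, hve⟩ := hvg
    rcases mem_glue.mp he with rfl | ⟨c', hc', ⟨hmax', t, htc', htf⟩, hec'⟩
    · exact htouch ⟨v, hvc, hve⟩
    · have hvc' : v ∈ evs c' := mem_evs.mpr ⟨e, hec', hve⟩
      have hcc' : c = c' := by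
        rcases hpair c hcmax.1 c' hc' with hd | hs | hs
        · exact absurd hvc' (Finset.disjoint_left.mp hd hvc)
        · exact hcmax.2 c' hc' hs
        · exact (hmax'.2 c hcmax.1 hs).symm
      exact htouch ⟨t, hcc' ▸ htc', htf⟩

section Core

variable {E : Finset (Sym2 V)} {F : Finset (Finset (Sym2 V))}

lemma owned_exists (hsub : ∀ A ∈ F, A ⊆ E) (hne : ∀ A ∈ F, A.Nonempty)
    (hconn : ∀ A ∈ F, Conn A) (hpair : ∀ A ∈ F, ∀ B ∈ F, Compat A B)
    {A : Finset (Sym2 V)} (hA : A ∈ F) :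
    ∃ f ∈ A, ∀ B ∈ F, B ⊂ A → f ∉ B := by
  by_contra hcon
  push_neg at hcon
  set S := F.filter (fun B => B ⊂ A) with hSdef
  have cov : ∀ f ∈ A, ∃ c, Maxl S c ∧ f ∈ c := by
    intro f hf
    obtain ⟨B, hBF, hBA, hfB⟩ := hcon f hf
    have hBS : B ∈ S := Finset.mem_filter.mpr ⟨hBF, hBA⟩
    obtain ⟨c, hc, hBc⟩ := exists_maxl hBS
    exact ⟨c, hc, hBc hfB⟩
  have hSF : ∀ c ∈ S, c ∈ F := fun c hc => (Finset.mem_filter.mp hc).1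
  have hSA : ∀ c ∈ S, c ⊂ A := fun c hc => (Finset.mem_filter.mp hc).2
  obtain ⟨f0, hf0⟩ := hne A hA
  obtain ⟨c, hcmax, hf0c⟩ := cov f0 hf0
  have hcF : c ∈ F := hSF c hcmax.1
  have hcA : c ⊂ A := hSA c hcmax.1
  -- any maximal member of S sharing a vertex with c equals c
  have same : ∀ c', Maxl S c' → ∀ v, v ∈ evs c → v ∈ evs c' → c = c' := by
    intro c' hc' v hvc hvc'
    rcases hpair c hcF c' (hSF c' hc'.1) with hd | hs | hs
    · exact absurd hvc' (Finset.disjoint_left.mp hd hvc)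
    · exact hcmax.2 c' hc'.1 hs
    · exact (hc'.2 c hcmax.1 hs).symm
  have claim1 : ∀ u w, Rel A u w → u ∈ evs c → w ∈ evs c := by
    intro u w h hu
    induction h with
    | refl => exact hu
    | @tail b w hub hstep ih =>
      obtain ⟨c', hc', hec'⟩ := cov _ hstep
      have hbc' : b ∈ evs c' := mem_evs.mpr ⟨_, hec', Sym2.mem_mk_left _ _⟩
      have := same c' hc' b ih hbc'
      subst this
      exact mem_evs.mpr ⟨_, hec', Sym2.mem_mk_right _ _⟩
  have v0 : V := f0.out.1
  have hv0f0 : f0.out.1 ∈ f0 := Sym2.out_fst_mem f0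
  have hv0c : f0.out.1 ∈ evs c := mem_evs.mpr ⟨f0, hf0c, hv0f0⟩
  have claim2 : A ⊆ c := by
    intro e he
    have hbe : e.out.1 ∈ e := Sym2.out_fst_mem e
    have hbA : e.out.1 ∈ evs A := mem_evs.mpr ⟨e, he, hbe⟩
    have hv0A : f0.out.1 ∈ evs A := evs_mono hcA.subset hv0c
    have hrel : Rel A f0.out.1 e.out.1 := hconn A hA _ hv0A _ hbA
    have hbc : e.out.1 ∈ evs c := claim1 _ _ hrel hv0c
    obtain ⟨c', hc', hec'⟩ := cov e he
    have hbc' : e.out.1 ∈ evs c' := mem_evs.mpr ⟨e, hec', hbe⟩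
    have := same c' hc' _ hbc hbc'
    subst this
    exact hec'
  exact hcA.not_subset claim2

lemma unique_owned (hsub : ∀ A ∈ F, A ⊆ E) (hne : ∀ A ∈ F, A.Nonempty)
    (hconn : ∀ A ∈ F, Conn A) (hpair : ∀ A ∈ F, ∀ B ∈ F, Compat A B)
    (hmax : ∀ B, B ⊆ E → B.Nonempty → Conn B → (∀ A ∈ F, Compat B A) → B ∈ F)
    {A : Finset (Sym2 V)} (hA : A ∈ F) {f g : Sym2 V} (hf : f ∈ A) (hg : g ∈ A)
    (hof : ∀ B ∈ F, B ⊂ A → f ∉ B) (hog : ∀ B ∈ F, B ⊂ A → g ∉ B) : f = g := by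
  by_contra hfg
  set S := F.filter (fun B => B ⊂ A) with hSdef
  have hSF : ∀ c ∈ S, c ∈ F := fun c hc => (Finset.mem_filter.mp hc).1
  have hSA : ∀ c ∈ S, c ⊂ A := fun c hc => (Finset.mem_filter.mp hc).2
  set B0 := glue S f with hB0def
  have hB0A : B0 ⊆ A := glue_subset hf (fun c hc => (hSA c hc).subset)
  have hgB0 : g ∉ B0 := by
    intro hgB0
    rcases mem_glue.mp hgB0 with rfl | ⟨c, hc, _, hgc⟩
    · exact hfg rfl
    · exact hog c (hSF c hc) (hSA c hc) hgc
  have hB0ssA : B0 ⊂ A := (Finset.ssubset_iff_of_subset hB0A).mpr ⟨g, hg, hgB0⟩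
  have hSpair : ∀ c ∈ S, ∀ c' ∈ S, Compat c c' :=
    fun c hc c' hc' => hpair c (hSF c hc) c' (hSF c' hc')
  have hB0F : B0 ∈ F := by
    refine hmax B0 (hB0A.trans (hsub A hA)) ⟨f, self_mem_glue⟩
      (conn_glue (fun c hc => hconn c (hSF c hc))) ?_
    intro A' hA'
    by_cases hA'A : A' = A
    · subst hA'A; exact Or.inr (Or.inl hB0A)
    rcases hpair A hA A' hA' with hd | hs | hs
    · exact Or.inl (hd.mono_left (evs_mono hB0A))
    · exact Or.inr (Or.inl (hB0A.trans hs))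
    · have hA'S : A' ∈ S := Finset.mem_filter.mpr ⟨hA', hs.ssubset_of_ne hA'A⟩
      rcases glue_compat hSpair A' hA'S with h | h
      · exact Or.inr (Or.inr h)
      · exact Or.inl h.symm
  exact hof B0 hB0F hB0ssA self_mem_glue

lemma cover (hsub : ∀ A ∈ F, A ⊆ E) (hconn : ∀ A ∈ F, Conn A)
    (hpair : ∀ A ∈ F, ∀ B ∈ F, Compat A B)
    (hmax : ∀ B, B ⊆ E → B.Nonempty → Conn B → (∀ A ∈ F, Compat B A) → B ∈ F)
    {f : Sym2 V} (hf : f ∈ E) : ∃ A ∈ F, f ∈ A := by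
  refine ⟨glue F f, hmax _ (glue_subset hf hsub) ⟨f, self_mem_glue⟩ (conn_glue hconn)
    ?_, self_mem_glue⟩
  intro A' hA'
  rcases glue_compat hpair A' hA' with h | h
  · exact Or.inr (Or.inr h)
  · exact Or.inl h.symm

lemma owns_of_owned (hpair : ∀ A ∈ F, ∀ B ∈ F, Compat A B)
    {A : Finset (Sym2 V)} (hA : A ∈ F) {f : Sym2 V} (hf : f ∈ A)
    (hof : ∀ B ∈ F, B ⊂ A → f ∉ B) : ∀ B ∈ F, f ∈ B → A ⊆ B := by
  intro B hB hfB
  have hofA : f.out.1 ∈ f := Sym2.out_fst_mem f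
  rcases hpair A hA B hB with hd | hs | hs
  · exact absurd (mem_evs.mpr ⟨f, hfB, hofA⟩)
      (Finset.disjoint_left.mp hd (mem_evs.mpr ⟨f, hf, hofA⟩))
  · exact hs
  · by_cases hBA : B = A
    · subst hBA; exact Finset.Subset.refl _
    · exact absurd hfB (hof B hB (hs.ssubset_of_ne hBA))

lemma min_exists (hsub : ∀ A ∈ F, A ⊆ E) (hconn : ∀ A ∈ F, Conn A)
    (hpair : ∀ A ∈ F, ∀ B ∈ F, Compat A B)
    (hmax : ∀ B, B ⊆ E → B.Nonempty → Conn B → (∀ A ∈ F, Compat B A) → B ∈ F)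
    {f : Sym2 V} (hf : f ∈ E) :
    ∃ A, A ∈ F ∧ f ∈ A ∧ ∀ B ∈ F, f ∈ B → A ⊆ B := by
  classical
  obtain ⟨A0, hA0F, hfA0⟩ := cover hsub hconn hpair hmax hf
  obtain ⟨A, hASf, hminA⟩ := Finset.exists_min_image (F.filter fun B => f ∈ B)
    Finset.card ⟨A0, Finset.mem_filter.mpr ⟨hA0F, hfA0⟩⟩
  rw [Finset.mem_filter] at hASf
  refine ⟨A, hASf.1, hASf.2, fun B hB hfB => ?_⟩
  have hofA : f.out.1 ∈ f := Sym2.out_fst_mem f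
  rcases hpair A hASf.1 B hB with hd | hs | hs
  · exact absurd (mem_evs.mpr ⟨f, hfB, hofA⟩)
      (Finset.disjoint_left.mp hd (mem_evs.mpr ⟨f, hASf.2, hofA⟩))
  · exact hs
  · have : B = A := Finset.eq_of_subset_of_card_le hs
      (hminA B (Finset.mem_filter.mpr ⟨hB, hfB⟩))
    exact this ▸ Finset.Subset.refl _

theorem core (hsub : ∀ A ∈ F, A ⊆ E) (hne : ∀ A ∈ F, A.Nonempty)
    (hconn : ∀ A ∈ F, Conn A) (hpair : ∀ A ∈ F, ∀ B ∈ F, Compat A B)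
    (hmax : ∀ B, B ⊆ E → B.Nonempty → Conn B → (∀ A ∈ F, Compat B A) → B ∈ F) :
    F.card = E.card := by
  classical
  refine (Finset.card_bij (fun f hf => Classical.choose (min_exists hsub hconn hpair hmax hf))
    ?_ ?_ ?_).symm
  · intro f hf
    exact (Classical.choose_spec (min_exists hsub hconn hpair hmax hf)).1
  · intro f hf g hg heq
    obtain ⟨hAF, hfA, hminf⟩ := Classical.choose_spec (min_exists hsub hconn hpair hmax hf)
    obtain ⟨hBF, hgB, hming⟩ := Classical.choose_spec (min_exists hsub hconn hpair hmax hg)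
    have heq' : Classical.choose (min_exists hsub hconn hpair hmax hf)
        = Classical.choose (min_exists hsub hconn hpair hmax hg) := heq
    rw [heq'] at hfA hminf
    refine unique_owned hsub hne hconn hpair hmax hBF hfA hgB ?_ ?_
    · intro B hB hBss hfB
      exact hBss.not_subset (hminf B hB hfB)
    · intro B hB hBss hgB'
      exact hBss.not_subset (hming B hB hgB')
  · intro A hA
    obtain ⟨f, hfA, hof⟩ := owned_exists hsub hne hconn hpair hA
    have hfE : f ∈ E := hsub A hA hfA
    refine ⟨f, hfE, ?_⟩
    obtain ⟨hAF', hfA', hminf⟩ := Classical.choose_spec (min_exists hsub hconn hpair hmax hfE)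
    exact Finset.Subset.antisymm
      (hminf A hA hfA)
      (owns_of_owned hpair hA hfA hof _ hAF' hfA')

end Core


-- bridge between tubes and edge sets

lemma edge_two {e : Sym2 V} (he : ¬ e.IsDiag) : e.out.1 ∈ e ∧ e.out.2 ∈ e ∧ e.out.1 ≠ e.out.2 := by
  refine ⟨Sym2.out_fst_mem e, Sym2.out_snd_mem e, ?_⟩
  intro h
  apply he
  rw [← e.out_eq]
  exact Sym2.isDiag_iff_proj_eq.mpr h

/-- the singleton tube at `v` -/
def singTube (E : Finset (Sym2 V)) (v : V) : Tube E where
  verts := {v}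
  edges := ∅
  nonempty := ⟨v, Finset.mem_singleton_self v⟩
  edges_sub := Finset.empty_subset E
  endpoints_mem := fun e he => absurd he (Finset.notMem_empty e)
  conn := fun u hu w hw => by
    rw [Finset.mem_singleton] at hu hw
    subst hu; subst hw; exact Relation.ReflTransGen.refl

lemma eq_singTube {E : Finset (Sym2 V)} {t : Tube E} (h : t.edges = ∅) :
    ∃ v, t = singTube E v := by
  obtain ⟨v, hv⟩ := t.nonempty
  have hverts : t.verts = {v} := by
    apply Finset.Subset.antisymm
    · intro w hw
      have := t.conn v hv w hw
      rw [h] at this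
      have : w = v := (Relation.reflTransGen_iff_eq (by simp)).mp this
      simp [this]
    · simp [hv]
  exact ⟨v, Tube.ext' hverts h⟩

lemma tube_verts_eq {E : Finset (Sym2 V)} (hE : ∀ e ∈ E, ¬ e.IsDiag)
    {t : Tube E} (h : t.edges ≠ ∅) : t.verts = St8.evs t.edges := by
  apply Finset.Subset.antisymm
  · intro u hu
    obtain ⟨e, he⟩ := Finset.nonempty_iff_ne_empty.mpr h
    obtain ⟨hx, hy, hxy⟩ := edge_two (hE e (t.edges_sub he))
    have hxv : e.out.1 ∈ t.verts := t.endpoints_mem e he _ hx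
    have hyv : e.out.2 ∈ t.verts := t.endpoints_mem e he _ hy
    obtain ⟨w, hwv, hwu⟩ : ∃ w ∈ t.verts, w ≠ u := by
      by_cases hux : u = e.out.1
      · exact ⟨e.out.2, hyv, fun hh => hxy (hux ▸ hh.symm ▸ rfl)⟩
      · exact ⟨e.out.1, hxv, fun hh => hux (hh ▸ rfl)⟩
    have hrel := t.conn u hu w hwv
    rcases hrel.cases_head with heq | ⟨c, hc, -⟩
    · exact absurd heq.symm hwu
    · exact St8.mem_evs.mpr ⟨_, hc, Sym2.mem_mk_left _ _⟩
  · intro u hu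
    obtain ⟨e, he, hue⟩ := St8.mem_evs.mp hu
    exact t.endpoints_mem e he u hue

lemma tube_conn {E : Finset (Sym2 V)} (hE : ∀ e ∈ E, ¬ e.IsDiag)
    {t : Tube E} (h : t.edges ≠ ∅) : St8.Conn t.edges := by
  intro u hu w hw
  rw [← tube_verts_eq hE h] at hu hw
  exact t.conn u hu w hw

/-- the tube with a given connected nonempty edge set -/
def tubeOf (E : Finset (Sym2 V)) (B : Finset (Sym2 V)) (hBE : B ⊆ E)
    (hBne : B.Nonempty) (hBconn : St8.Conn B) : Tube E where
  verts := St8.evs B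
  edges := B
  nonempty := by
    obtain ⟨e, he⟩ := hBne
    exact ⟨e.out.1, St8.mem_evs.mpr ⟨e, he, Sym2.out_fst_mem e⟩⟩
  edges_sub := hBE
  endpoints_mem := fun e he v hv => St8.mem_evs.mpr ⟨e, he, hv⟩
  conn := hBconn

lemma singTube_mem {E : Finset (Sym2 V)} {T : Finset (Tube E)}
    (hT : IsMaxTubing E T) (v : V) : singTube E v ∈ T := by
  have h : IsTubing E (insert (singTube E v) T) := by
    intro t1 h1 t2 h2
    rcases Finset.mem_insert.mp h1 with rfl | h1
    · exact Or.inr (Or.inl (Finset.empty_subset _))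
    rcases Finset.mem_insert.mp h2 with rfl | h2
    · exact Or.inr (Or.inr (Finset.empty_subset _))
    · exact hT.1 t1 h1 t2 h2
  have := hT.2 _ h (Finset.subset_insert _ _)
  rw [← this]; exact Finset.mem_insert_self _ _

end St8

/-- Every maximal tubing of a finite simple graph `G = (V, E)` has
cardinality exactly `|V| + |E|`. -/
theorem statement8 (E : Finset (Sym2 V)) (hE : ∀ e ∈ E, ¬ e.IsDiag)
    (T : Finset (Tube E)) (hT : IsMaxTubing E T) :
    T.card = Fintype.card V + E.card := by
  classical
  have hsplit : T.card = (T.filter fun t => t.edges = ∅).card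
      + (T.filter fun t => ¬ t.edges = ∅).card :=
    (Finset.card_filter_add_card_filter_not (fun t : Tube E => t.edges = ∅)).symm
  -- singleton part
  have hsing : T.filter (fun t => t.edges = ∅) = Finset.univ.image (St8.singTube E) := by
    ext t
    rw [Finset.mem_filter, Finset.mem_image]
    constructor
    · rintro ⟨htT, hte⟩
      obtain ⟨v, rfl⟩ := St8.eq_singTube hte
      exact ⟨v, Finset.mem_univ v, rfl⟩
    · rintro ⟨v, -, rfl⟩
      exact ⟨St8.singTube_mem hT v, rfl⟩
  have hsinj : Function.Injective (St8.singTube E) := by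
    intro v w h
    have : ({v} : Finset V) = {w} := congrArg Tube.verts h
    simpa using this
  have hcard1 : (T.filter fun t => t.edges = ∅).card = Fintype.card V := by
    rw [hsing, Finset.card_image_of_injective _ hsinj, Finset.card_univ]
  -- nonsingleton part
  set F := (T.filter fun t => ¬ t.edges = ∅).image Tube.edges with hFdef
  have hcard2 : (T.filter fun t => ¬ t.edges = ∅).card = F.card := by
    rw [hFdef]
    refine (Finset.card_image_of_injOn ?_).symm
    intro t1 h1 t2 h2 he
    rw [Finset.mem_coe, Finset.mem_filter] at h1 h2
    exact Tube.ext' (by rw [St8.tube_verts_eq hE h1.2, St8.tube_verts_eq hE h2.2, he]) he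
  have hmemF : ∀ A ∈ F, ∃ t ∈ T, ¬ t.edges = ∅ ∧ t.edges = A := by
    intro A hA
    rw [hFdef, Finset.mem_image] at hA
    obtain ⟨t, ht, rfl⟩ := hA
    rw [Finset.mem_filter] at ht
    exact ⟨t, ht.1, ht.2, rfl⟩
  have hFE : F.card = E.card := by
    apply St8.core (E := E)
    · intro A hA
      obtain ⟨t, -, -, rfl⟩ := hmemF A hA
      exact t.edges_sub
    · intro A hA
      obtain ⟨t, -, hne, rfl⟩ := hmemF A hA
      exact Finset.nonempty_iff_ne_empty.mpr hne
    · intro A hA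
      obtain ⟨t, -, hne, rfl⟩ := hmemF A hA
      exact St8.tube_conn hE hne
    · intro A hA B hB
      obtain ⟨t1, ht1, hne1, rfl⟩ := hmemF A hA
      obtain ⟨t2, ht2, hne2, rfl⟩ := hmemF B hB
      rcases hT.1 t1 ht1 t2 ht2 with hd | hs | hs
      · exact Or.inl (by rwa [St8.tube_verts_eq hE hne1, St8.tube_verts_eq hE hne2] at hd)
      · exact Or.inr (Or.inl hs)
      · exact Or.inr (Or.inr hs)
    · intro B hBE hBne hBconn hcompat
      set tB := St8.tubeOf E B hBE hBne hBconn with htBdef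
      have htub : IsTubing E (insert tB T) := by
        intro t1 h1 t2 h2
        rcases Finset.mem_insert.mp h1 with rfl | h1
        · rcases Finset.mem_insert.mp h2 with rfl | h2
          · exact Or.inr (Or.inl (Finset.Subset.refl _))
          by_cases hne2 : t2.edges = ∅
          · exact Or.inr (Or.inr (hne2 ▸ Finset.empty_subset _))
          · have hA2 : t2.edges ∈ F := by
              rw [hFdef, Finset.mem_image]
              exact ⟨t2, Finset.mem_filter.mpr ⟨h2, hne2⟩, rfl⟩
            rcases hcompat t2.edges hA2 with hd | hs | hs
            · exact Or.inl (by
                rw [St8.tube_verts_eq hE hne2]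
                exact hd)
            · exact Or.inr (Or.inl hs)
            · exact Or.inr (Or.inr hs)
        rcases Finset.mem_insert.mp h2 with rfl | h2
        · by_cases hne1 : t1.edges = ∅
          · exact Or.inr (Or.inl (hne1 ▸ Finset.empty_subset _))
          · have hA1 : t1.edges ∈ F := by
              rw [hFdef, Finset.mem_image]
              exact ⟨t1, Finset.mem_filter.mpr ⟨h1, hne1⟩, rfl⟩
            rcases hcompat t1.edges hA1 with hd | hs | hs
            · exact Or.inl (by
                rw [St8.tube_verts_eq hE hne1]
                exact hd.symm)
            · exact Or.inr (Or.inr hs)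
            · exact Or.inr (Or.inl hs)
        · exact hT.1 t1 h1 t2 h2
      have htBT : tB ∈ T := by
        have := hT.2 _ htub (Finset.subset_insert _ _)
        rw [← this]; exact Finset.mem_insert_self _ _
      rw [hFdef, Finset.mem_image]
      refine ⟨tB, Finset.mem_filter.mpr ⟨htBT, ?_⟩, rfl⟩
      exact Finset.nonempty_iff_ne_empty.mp hBne
  rw [hsplit, hcard1, hcard2, hFE]
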